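/- (Theorem 2, invariant form.) Let N be a finite set of voters, 𝒞 an M-winning coalition set on N, and S = (S_1,…,S_K) a sequence of nonempty, pairwise distinct subsets of N with S_K a singleton, such that for every C ∈ 𝒞 there exists k ∈ {1,…,K} with S_k ⊆ C and S_l ∩ C ≠ ∅ for all l < k (every sequence produced by Algorithm 1 from 𝒞 has this property). Then for every profile R : N → Bool, the sequential unanimity rule associated with S and the M-winning coalition rule associated with 𝒞 give the same outcome. -/
import Mathlib


/-- A rule is strategy-proof if whenever a voter's misreport would give his true
preference, truthful reporting gives it as well. -/
def StrategyProof {N : Type*} [DecidableEq N] (f : (N → Bool) → Bool) : Prop :=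
  ∀ (R : N → Bool) (i : N) (b : Bool), f (Function.update R i b) = R i → f R = R i

/-- A rule is neutral if it commutes with flipping the two candidates. -/
def Neutral {N : Type*} (f : (N → Bool) → Bool) : Prop :=
  ∀ R : N → Bool, f (fun i => !(R i)) = !(f R)

/-- An M-winning coalition set: nonempty, members nonempty, minimality (P1),
and Moulin's property (P2). -/
def IsMWCS {N : Type*} [DecidableEq N] (𝒞 : Set (Finset N)) : Prop :=
  𝒞.Nonempty ∧ (∀ C ∈ 𝒞, C.Nonempty) ∧
    (∀ C ∈ 𝒞, ∀ C' ∈ 𝒞, C ⊆ C' → C = C') ∧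
    (∀ C : Finset N, (∃ C' ∈ 𝒞, C' ⊆ C) ↔ ∀ C'' ∈ 𝒞, (C ∩ C'').Nonempty)

/-- `f` is the M-winning coalition rule associated with `𝒞`. -/
def IsMWCRule {N : Type*} (𝒞 : Set (Finset N)) (f : (N → Bool) → Bool) : Prop :=
  ∀ (R : N → Bool) (x : Bool), f R = x ↔ ∃ C ∈ 𝒞, ∀ i ∈ C, R i = x

/-- `g` is the sequential unanimity rule associated with the sequence `S`. -/
def IsSURule {N : Type*} {K : ℕ} (S : Fin K → Finset N) (g : (N → Bool) → Bool) : Prop :=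
  ∀ (R : N → Bool) (x : Bool),
    g R = x ↔ ∃ k : Fin K, (∀ i ∈ S k, R i = x) ∧
      ∀ l < k, ∃ i ∈ S l, ∃ j ∈ S l, R i ≠ R j

/-- Theorem 2 (invariant form): if for every winning coalition C there is a term of the
sequence contained in C all of whose predecessors meet C, then the sequential unanimity
rule and the M-winning coalition rule coincide at every profile. -/
theorem stmt6 {N : Type*} [Fintype N] [DecidableEq N] {K : ℕ}
    (𝒞 : Set (Finset N)) (h𝒞 : IsMWCS 𝒞)
    (S : Fin (K + 1) → Finset N) (hne : ∀ k, (S k).Nonempty)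
    (hinj : Function.Injective S) (hlast : (S (Fin.last K)).card = 1)
    (hinv : ∀ C ∈ 𝒞, ∃ k : Fin (K + 1), S k ⊆ C ∧ ∀ l < k, (S l ∩ C).Nonempty)
    (f g : (N → Bool) → Bool) (hf : IsMWCRule 𝒞 f) (hg : IsSURule S g)
    (R : N → Bool) : g R = f R := by
  classical
  obtain ⟨C, hC, hCx⟩ := (hf R (f R)).mp rfl
  -- unanimity predicate
  set P : Fin (K + 1) → Prop := fun k => ∀ i ∈ S k, ∀ j ∈ S k, R i = R j with hP
  have hlastP : P (Fin.last K) := by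
    intro i hi j hj
    obtain ⟨a, ha⟩ := Finset.card_eq_one.mp hlast
    rw [ha] at hi hj
    simp only [Finset.mem_singleton] at hi hj
    rw [hi, hj]
  have hTne : (Finset.univ.filter P).Nonempty :=
    ⟨Fin.last K, Finset.mem_filter.mpr ⟨Finset.mem_univ _, hlastP⟩⟩
  set k := (Finset.univ.filter P).min' hTne with hk
  have hkP : P k := by
    have := (Finset.univ.filter P).min'_mem hTne
    exact (Finset.mem_filter.mp this).2
  have hmin : ∀ l, P l → k ≤ l := by
    intro l hl
    exact Finset.min'_le _ _ (Finset.mem_filter.mpr ⟨Finset.mem_univ _, hl⟩)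
  obtain ⟨i₀, hi₀⟩ := hne k
  -- x' := R i₀ is the outcome of g
  have hgR : g R = R i₀ := by
    rw [hg R (R i₀)]
    refine ⟨k, fun i hi => hkP i hi i₀ hi₀, ?_⟩
    intro l hl
    have hnl : ¬ P l := by
      intro h
      exact absurd (hmin l h) (not_le.mpr hl)
    obtain ⟨a, ha⟩ := hne l
    by_contra hcon
    push_neg at hcon
    apply hnl
    intro i hi j hj
    have h1 := hcon i hi j hj
    simpa using h1
  -- now show R i₀ = f R using hinv
  obtain ⟨k₀, hk₀sub, hk₀meet⟩ := hinv C hC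
  have hkk₀ : k ≤ k₀ := by
    apply hmin
    intro i hi j hj
    rw [hCx i (hk₀sub hi), hCx j (hk₀sub hj)]
  rcases eq_or_lt_of_le hkk₀ with heq | hlt
  · rw [hgR, hCx i₀ (hk₀sub (heq ▸ hi₀))]
  · obtain ⟨i, hi⟩ := hk₀meet k hlt
    rw [Finset.mem_inter] at hi
    rw [hgR, hkP i₀ hi₀ i hi.1, hCx i hi.2]
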